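/- Let X be a real normed space, Y a real topological vector space, λ > 0, and let π : X → Y be a quotient map satisfying condition (★) with exponent λ. Then for all y₁, y₂ ∈ Y and all α ∈ ℝ \ {0}: |α| · dist(π⁻¹(y₁), π⁻¹(y₂)) = dist( ((1/α^[λ])π)⁻¹(y₁), ((1/α^[λ])π)⁻¹(y₂) ), where ((1/α^[λ])π)⁻¹(y) := {x ∈ X : π(x) = α^[λ]·y} and dist(A,B) := inf{‖a−b‖ : a ∈ A, b ∈ B}. -/

import Mathlib

/-- Signed power: `α^[λ] := sign(α)·|α|^λ`. -/
noncomputable def spow (α lam : ℝ) : ℝ := Real.sign α * |α| ^ lam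

/-- Distance between two subsets of a normed space: `inf{‖a−b‖ : a ∈ A, b ∈ B}`. -/
noncomputable def setDist {X : Type*} [MetricSpace X] (A B : Set X) : ℝ :=
  sInf (Set.image2 dist A B)

lemma spow_zero' (lam : ℝ) : spow 0 lam = 0 := by simp [spow]

lemma spow_mul_spow_inv (α lam : ℝ) (hα : α ≠ 0) :
    spow α⁻¹ lam * spow α lam = 1 := by
  unfold spow
  rw [abs_inv, Real.inv_rpow (abs_nonneg α)]
  have h1 : (0:ℝ) < |α| ^ lam := Real.rpow_pos_of_pos (abs_pos.mpr hα) lam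
  rcases hα.lt_or_gt with h | h
  · rw [Real.sign_of_neg h, Real.sign_of_neg ((inv_lt_zero).mpr h)]
    field_simp
  · rw [Real.sign_of_pos h, Real.sign_of_pos (inv_pos.mpr h)]
    field_simp

/-- If `π : X → Y` is a quotient map satisfying condition (★) with exponent `λ > 0`,
then `|α|·dist(π⁻¹(y₁),π⁻¹(y₂)) = dist(((1/α^[λ])π)⁻¹(y₁),((1/α^[λ])π)⁻¹(y₂))`
for all `y₁, y₂ ∈ Y` and `α ≠ 0`. -/
theorem statement_6 {X Y : Type*} [NormedAddCommGroup X] [NormedSpace ℝ X]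
    [AddCommGroup Y] [Module ℝ Y] [TopologicalSpace Y]
    [IsTopologicalAddGroup Y] [ContinuousSMul ℝ Y]
    (lam : ℝ) (hlam : 0 < lam) (π : X → Y)
    (hcont : Continuous π) (hopen : IsOpenMap π) (hsurj : Function.Surjective π)
    (hstar : ∀ x₁ x₂ : X, ∀ α β : ℝ, (α, β) ≠ (0, 0) →
      π (α • x₁ + β • x₂) = spow α lam • π x₁ + spow β lam • π x₂) :
    ∀ (y₁ y₂ : Y) (α : ℝ), α ≠ 0 →
      |α| * setDist (π ⁻¹' {y₁}) (π ⁻¹' {y₂}) =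
        setDist {x : X | π x = spow α lam • y₁} {x : X | π x = spow α lam • y₂} := by
  -- homogeneity of π
  have hhom : ∀ (β : ℝ), β ≠ 0 → ∀ x : X, π (β • x) = spow β lam • π x := by
    intro β hβ x
    have h := hstar x x β 0 (by simp [hβ])
    simpa [spow_zero'] using h
  intro y₁ y₂ α hα
  -- description of the fibers of the rescaled map
  have hS : ∀ y : Y, {x : X | π x = spow α lam • y} = (fun x => α • x) '' (π ⁻¹' {y}) := by
    intro y
    ext x
    constructor
    · intro hx
      refine ⟨α⁻¹ • x, ?_, by simp [smul_smul, hα]⟩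
      have : π (α⁻¹ • x) = spow α⁻¹ lam • π x := hhom α⁻¹ (inv_ne_zero hα) x
      simp only [Set.mem_setOf_eq] at hx
      simp only [Set.mem_preimage, Set.mem_singleton_iff, this, hx, smul_smul,
        spow_mul_spow_inv α lam hα, one_smul]
    · rintro ⟨a, ha, rfl⟩
      have := hhom α hα a
      simp only [Set.mem_preimage, Set.mem_singleton_iff] at ha
      simp [Set.mem_setOf_eq, this, ha]
  have himg : Set.image2 dist {x : X | π x = spow α lam • y₁} {x : X | π x = spow α lam • y₂}
      = (fun r => |α| * r) '' Set.image2 dist (π ⁻¹' {y₁}) (π ⁻¹' {y₂}) := by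
    rw [hS y₁, hS y₂, Set.image2_image_left, Set.image2_image_right, Set.image_image2]
    simp only [dist_smul₀, Real.norm_eq_abs]
  unfold setDist
  rw [himg]
  have := Real.sInf_smul_of_nonneg (abs_nonneg α) (Set.image2 dist (π ⁻¹' {y₁}) (π ⁻¹' {y₂}))
  simp only [← Set.image_smul, smul_eq_mul] at this
  exact this.symm
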